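/- Suppose Y_t = ⟨X_t, θ*⟩ + ε_t for all t ≥ 1, where θ* ∈ H satisfies ‖θ*‖ ≤ D < ∞. Let θ_t(ρ) = (V_t + ρI)^{-1} Σ_{i=1}^t X_i Y_i be the ridge regression estimator. Let (J_t)_{t≥1} be any process of random variables such that P( ‖(ρI + V_t)^{-1/2} M_t‖ ≤ J_t for all t ≥ 1 ) ≥ 1 − δ. Then P( ‖(V_t + ρI)^{1/2} (θ_t(ρ) − θ*)‖ ≤ J_t + ρ^{1/2} D for all t ≥ 1 ) ≥ 1 − δ. -/

import Mathlib

open MeasureTheory Filter Real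
open scoped RealInnerProductSpace

noncomputable def outerProd {H : Type*} [NormedAddCommGroup H] [InnerProductSpace ℝ H]
    (x : H) : H →L[ℝ] H :=
  (innerSL ℝ x).smulRight x

set_option maxHeartbeats 800000 in
theorem stmt_9
    {H : Type*} [NormedAddCommGroup H] [InnerProductSpace ℝ H] [CompleteSpace H]
    [SecondCountableTopology H]
    {Ω : Type*} {m0 : MeasurableSpace Ω} {μ : Measure Ω} [IsProbabilityMeasure μ]
    (ℱ : Filtration ℕ m0)
    (X : ℕ → Ω → H) (ε : ℕ → Ω → ℝ)
    (hX : ∀ t, 1 ≤ t → StronglyMeasurable[ℱ (t - 1)] (X t))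
    (hεmeas : ∀ t, 1 ≤ t → StronglyMeasurable[ℱ t] (ε t))
    (hεint : ∀ t, 1 ≤ t → Integrable (ε t) μ)
    (hε0 : ∀ t, 1 ≤ t → μ[ε t | ℱ (t - 1)] =ᵐ[μ] 0)
    (ρ : ℝ) (hρ : 0 < ρ)
    (Q Qinv : ℕ → Ω → H →L[ℝ] H)
    (hQpos : ∀ t ω, (Q t ω).IsPositive)
    (hQsq : ∀ t ω, Q t ω ∘L Q t ω =
      ρ • (1 : H →L[ℝ] H) + ∑ i ∈ Finset.Icc 1 t, outerProd (X i ω))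
    (hQinv : ∀ t ω, Qinv t ω ∘L Q t ω = 1 ∧ Q t ω ∘L Qinv t ω = 1)
    (Y : ℕ → Ω → ℝ) (θstar : H) (D : ℝ) (hD : ‖θstar‖ ≤ D)
    (hY : ∀ t, 1 ≤ t → ∀ ω, Y t ω = ⟪ X t ω, θstar ⟫ + ε t ω)
    (Ainv : ℕ → Ω → H →L[ℝ] H)
    (hAinv : ∀ t ω,
      Ainv t ω ∘L (ρ • (1 : H →L[ℝ] H) + ∑ i ∈ Finset.Icc 1 t, outerProd (X i ω)) = 1 ∧
      (ρ • (1 : H →L[ℝ] H) + ∑ i ∈ Finset.Icc 1 t, outerProd (X i ω)) ∘L Ainv t ω = 1)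
    (θhat : ℕ → Ω → H)
    (hθhat : ∀ t ω, θhat t ω = Ainv t ω (∑ i ∈ Finset.Icc 1 t, Y i ω • X i ω))
    (δ : ℝ) (hδ : δ ∈ Set.Ioo (0 : ℝ) 1)
    (J : ℕ → Ω → ℝ)
    (hJ : ENNReal.ofReal (1 - δ) ≤
      μ {ω | ∀ t, 1 ≤ t → ‖Qinv t ω (∑ i ∈ Finset.Icc 1 t, ε i ω • X i ω)‖ ≤ J t ω}) :
    ENNReal.ofReal (1 - δ) ≤
      μ {ω | ∀ t, 1 ≤ t →
        ‖Q t ω (θhat t ω - θstar)‖ ≤ J t ω + Real.sqrt ρ * D} := by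
  refine le_trans hJ (measure_mono ?_)
  intro ω hω t ht
  simp only [Set.mem_setOf_eq] at hω
  set M : H := ∑ i ∈ Finset.Icc 1 t, ε i ω • X i ω with hM
  obtain ⟨h1, h2⟩ := hQinv t ω
  obtain ⟨hA1, hA2⟩ := hAinv t ω
  have h1' : Qinv t ω * Q t ω = 1 := h1
  have h2' : Q t ω * Qinv t ω = 1 := h2
  have hA2' : (Q t ω * Q t ω) * Ainv t ω = 1 := by
    show (Q t ω ∘L Q t ω) ∘L Ainv t ω = 1
    rw [hQsq t ω]; exact hA2
  have hQQ' : (Qinv t ω * Qinv t ω) * (Q t ω * Q t ω) = 1 := by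
    rw [mul_assoc, ← mul_assoc (Qinv t ω) (Q t ω), h1', one_mul, h1']
  have hAiQ : Ainv t ω = Qinv t ω * Qinv t ω := by
    calc Ainv t ω = 1 * Ainv t ω := (one_mul _).symm
      _ = ((Qinv t ω * Qinv t ω) * (Q t ω * Q t ω)) * Ainv t ω := by rw [hQQ']
      _ = (Qinv t ω * Qinv t ω) * ((Q t ω * Q t ω) * Ainv t ω) := by rw [mul_assoc]
      _ = Qinv t ω * Qinv t ω := by rw [hA2', mul_one]
  have hQAi : Q t ω * Ainv t ω = Qinv t ω := by
    rw [hAiQ, ← mul_assoc, h2', one_mul]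
  -- applying A
  have hAapp : ∀ z : H,
      (ρ • (1 : H →L[ℝ] H) + ∑ i ∈ Finset.Icc 1 t, outerProd (X i ω)) z
        = ρ • z + ∑ i ∈ Finset.Icc 1 t, ⟪X i ω, z⟫ • X i ω := by
    intro z
    simp [ContinuousLinearMap.sum_apply, outerProd]
  -- sum identity
  have hsum : (∑ i ∈ Finset.Icc 1 t, Y i ω • X i ω)
      = (ρ • (1 : H →L[ℝ] H) + ∑ i ∈ Finset.Icc 1 t, outerProd (X i ω)) θstar
        - ρ • θstar + M := by
    rw [hAapp θstar, hM, add_sub_cancel_left, ← Finset.sum_add_distrib]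
    refine Finset.sum_congr rfl fun i hi => ?_
    have hi1 : 1 ≤ i := (Finset.mem_Icc.mp hi).1
    rw [hY i hi1 ω, add_smul]
  -- θhat - θstar
  have hAinvA : Ainv t ω
      ((ρ • (1 : H →L[ℝ] H) + ∑ i ∈ Finset.Icc 1 t, outerProd (X i ω)) θstar) = θstar := by
    have := ContinuousLinearMap.ext_iff.1 hA1 θstar
    simpa using this
  have hdiff : θhat t ω - θstar = Ainv t ω M - ρ • Ainv t ω θstar := by
    rw [hθhat t ω, hsum]
    simp only [map_add, map_sub, ContinuousLinearMap.map_smul, hAinvA]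
    abel
  -- apply Q
  have e1 : ∀ z : H, Q t ω (Ainv t ω z) = Qinv t ω z := by
    intro z
    have := ContinuousLinearMap.ext_iff.1 hQAi z
    simpa [ContinuousLinearMap.mul_apply] using this
  have hQdiff : Q t ω (θhat t ω - θstar) = Qinv t ω M - ρ • Qinv t ω θstar := by
    rw [hdiff, map_sub, ContinuousLinearMap.map_smul, e1, e1]
  -- norm bound for Qinv
  have hbound : ∀ x : H, Real.sqrt ρ * ‖Qinv t ω x‖ ≤ ‖x‖ := by
    intro x
    set y : H := Qinv t ω x with hy
    have hQy : Q t ω y = x := by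
      have := ContinuousLinearMap.ext_iff.1 h2 x
      simpa using this
    have hsa : ContinuousLinearMap.adjoint (Q t ω) = Q t ω :=
      (ContinuousLinearMap.isSelfAdjoint_iff_isSymmetric.mpr (hQpos t ω).1).adjoint_eq
    have hinner : ⟪(ρ • (1 : H →L[ℝ] H) + ∑ i ∈ Finset.Icc 1 t, outerProd (X i ω)) y, y⟫
        = ‖x‖ ^ 2 := by
      have step : (ρ • (1 : H →L[ℝ] H) + ∑ i ∈ Finset.Icc 1 t, outerProd (X i ω)) y
          = Q t ω (Q t ω y) := by
        rw [← hQsq t ω]; rfl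
      rw [step, hQy]
      have : ⟪Q t ω x, y⟫ = ⟪x, Q t ω y⟫ := by
        have h := ContinuousLinearMap.adjoint_inner_left (Q t ω) y x
        rw [hsa] at h
        exact h
      rw [this, hQy, real_inner_self_eq_norm_sq]
    have hlow : ρ * ‖y‖ ^ 2
        ≤ ⟪(ρ • (1 : H →L[ℝ] H) + ∑ i ∈ Finset.Icc 1 t, outerProd (X i ω)) y, y⟫ := by
      rw [hAapp y, inner_add_left, real_inner_smul_left, sum_inner,
        real_inner_self_eq_norm_sq]
      have h0 : 0 ≤ ∑ i ∈ Finset.Icc 1 t, ⟪(⟪X i ω, y⟫ : ℝ) • X i ω, y⟫ := by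
        refine Finset.sum_nonneg fun i _ => ?_
        rw [real_inner_smul_left]
        exact mul_self_nonneg _
      linarith
    have hsq : ρ * ‖y‖ ^ 2 ≤ ‖x‖ ^ 2 := by rw [← hinner]; exact hlow
    have : Real.sqrt (ρ * ‖y‖ ^ 2) ≤ Real.sqrt (‖x‖ ^ 2) := Real.sqrt_le_sqrt hsq
    rwa [Real.sqrt_mul hρ.le, Real.sqrt_sq (norm_nonneg _),
      Real.sqrt_sq (norm_nonneg _)] at this
  have hρs : 0 < Real.sqrt ρ := Real.sqrt_pos.mpr hρ
  have hρsq : Real.sqrt ρ * Real.sqrt ρ = ρ := Real.mul_self_sqrt hρ.le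
  have hterm : ρ * ‖Qinv t ω θstar‖ ≤ Real.sqrt ρ * D := by
    calc ρ * ‖Qinv t ω θstar‖ = Real.sqrt ρ * (Real.sqrt ρ * ‖Qinv t ω θstar‖) := by
          rw [← mul_assoc, hρsq]
      _ ≤ Real.sqrt ρ * ‖θstar‖ := mul_le_mul_of_nonneg_left (hbound θstar) hρs.le
      _ ≤ Real.sqrt ρ * D := mul_le_mul_of_nonneg_left hD hρs.le
  calc ‖Q t ω (θhat t ω - θstar)‖ = ‖Qinv t ω M - ρ • Qinv t ω θstar‖ := by rw [hQdiff]
    _ ≤ ‖Qinv t ω M‖ + ‖ρ • Qinv t ω θstar‖ := norm_sub_le _ _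
    _ = ‖Qinv t ω M‖ + ρ * ‖Qinv t ω θstar‖ := by
        rw [norm_smul, Real.norm_of_nonneg hρ.le]
    _ ≤ J t ω + Real.sqrt ρ * D := add_le_add (hω t ht) hterm
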